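/- Let V : ℝ² → ℝ be twice continuously differentiable with ∂V/∂x(0,y) = 0 for all y ∈ ℝ, let F : ℝ⁴ → ℝ be twice continuously differentiable and satisfy the libration-preserving condition, and let δ ∈ ℝ. If c = (c₁,c₂,c₃,c₄) : ℝ → ℝ⁴ is differentiable and satisfies the deformed Hamilton's equations c₁' = c₃ + δ·∂F/∂p_x(c), c₂' = c₄ + δ·∂F/∂p_y(c), c₃' = −∂V/∂x(c₁,c₂) − δ·∂F/∂x(c), c₄' = −∂V/∂y(c₁,c₂) − δ·∂F/∂y(c) on all of ℝ, and c₁(0) = c₃(0) = 0, then c₁(t) = 0 and c₃(t) = 0 for all t ∈ ℝ. -/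

import Mathlib

open Set Metric

/-- The plane `x = pₓ = 0` is invariant under the deformed Hamiltonian
flow: any solution of the deformed Hamilton's equations starting with
`x(0) = pₓ(0) = 0` satisfies `x(t) = pₓ(t) = 0` for all `t`. -/
theorem invariant_plane_deformed_flow
    (V : ℝ × ℝ → ℝ) (hV : ContDiff ℝ 2 V)
    (hlibV : ∀ y : ℝ, fderiv ℝ V (0, y) (1, 0) = 0)
    (F : ℝ × ℝ × ℝ × ℝ → ℝ) (hF : ContDiff ℝ 2 F)
    (hlibF : ∀ y py : ℝ,
      fderiv ℝ F (0, y, 0, py) (0, 0, 1, 0) = 0 ∧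
      fderiv ℝ F (0, y, 0, py) (1, 0, 0, 0) = 0)
    (δ : ℝ)
    (c₁ c₂ c₃ c₄ : ℝ → ℝ)
    (hd₁ : Differentiable ℝ c₁) (hd₂ : Differentiable ℝ c₂)
    (hd₃ : Differentiable ℝ c₃) (hd₄ : Differentiable ℝ c₄)
    (e₁ : ∀ t : ℝ, deriv c₁ t
        = c₃ t + δ * fderiv ℝ F (c₁ t, c₂ t, c₃ t, c₄ t) (0, 0, 1, 0))
    (e₂ : ∀ t : ℝ, deriv c₂ t
        = c₄ t + δ * fderiv ℝ F (c₁ t, c₂ t, c₃ t, c₄ t) (0, 0, 0, 1))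
    (e₃ : ∀ t : ℝ, deriv c₃ t
        = - fderiv ℝ V (c₁ t, c₂ t) (1, 0)
          - δ * fderiv ℝ F (c₁ t, c₂ t, c₃ t, c₄ t) (1, 0, 0, 0))
    (e₄ : ∀ t : ℝ, deriv c₄ t
        = - fderiv ℝ V (c₁ t, c₂ t) (0, 1)
          - δ * fderiv ℝ F (c₁ t, c₂ t, c₃ t, c₄ t) (0, 1, 0, 0))
    (h₁0 : c₁ 0 = 0) (h₃0 : c₃ 0 = 0) :
    ∀ t : ℝ, c₁ t = 0 ∧ c₃ t = 0 := by
  -- derivatives of F and V are C¹, hence continuous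
  have h12 : (1 : WithTop ℕ∞) + 1 ≤ 2 := by norm_num
  have hdF : ContDiff ℝ 1 (fderiv ℝ F) := hF.fderiv_right h12
  have hdV : ContDiff ℝ 1 (fderiv ℝ V) := hV.fderiv_right h12
  have hcont : Continuous fun t => ((c₁ t, c₂ t, c₃ t, c₄ t) : ℝ × ℝ × ℝ × ℝ) :=
    hd₁.continuous.prodMk (hd₂.continuous.prodMk
      (hd₃.continuous.prodMk hd₄.continuous))
  -- c₂ and c₄ are C¹
  have hc₂ : ContDiff ℝ 1 c₂ := by
    rw [contDiff_one_iff_deriv]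
    refine ⟨hd₂, ?_⟩
    have h : deriv c₂ = fun t => c₄ t + δ * fderiv ℝ F (c₁ t, c₂ t, c₃ t, c₄ t) (0, 0, 0, 1) :=
      funext e₂
    rw [h]
    exact hd₄.continuous.add (continuous_const.mul
      ((hdF.continuous.comp hcont).clm_apply continuous_const))
  have hc₄ : ContDiff ℝ 1 c₄ := by
    rw [contDiff_one_iff_deriv]
    refine ⟨hd₄, ?_⟩
    have h : deriv c₄ = fun t => - fderiv ℝ V (c₁ t, c₂ t) (0, 1)
        - δ * fderiv ℝ F (c₁ t, c₂ t, c₃ t, c₄ t) (0, 1, 0, 0) := funext e₄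
    rw [h]
    exact (((hdV.continuous.comp (hd₁.continuous.prodMk hd₂.continuous)).clm_apply
      continuous_const).neg).sub (continuous_const.mul
      ((hdF.continuous.comp hcont).clm_apply continuous_const))
  -- the reduced time-dependent vector field
  set A : ℝ × (ℝ × ℝ) → ℝ × ℝ × ℝ × ℝ := fun p => (p.2.1, c₂ p.1, p.2.2, c₄ p.1) with hA_def
  set H : ℝ × (ℝ × ℝ) → ℝ × ℝ := fun p =>
    (p.2.2 + δ * fderiv ℝ F (A p) (0, 0, 1, 0),
      - fderiv ℝ V (p.2.1, c₂ p.1) (1, 0) - δ * fderiv ℝ F (A p) (1, 0, 0, 0)) with hH_def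
  set v : ℝ → ℝ × ℝ → ℝ × ℝ := fun t u => H (t, u) with hvdef
  have hA : ContDiff ℝ 1 A :=
    (contDiff_snd.fst).prodMk ((hc₂.comp contDiff_fst).prodMk
      ((contDiff_snd.snd).prodMk (hc₄.comp contDiff_fst)))
  have hHc : ContDiff ℝ 1 H := by
    refine ContDiff.prodMk ?_ ?_
    · exact (contDiff_snd.snd).add
        (contDiff_const.mul (((hdF.comp hA).clm_apply contDiff_const)))
    · exact (((hdV.comp ((contDiff_snd.fst).prodMk (hc₂.comp contDiff_fst))).clm_apply
        contDiff_const).neg).sub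
        (contDiff_const.mul ((hdF.comp hA).clm_apply contDiff_const))
  -- the curve w = (c₁, c₃) solves the reduced ODE
  set w : ℝ → ℝ × ℝ := fun t => (c₁ t, c₃ t) with hw_def
  have hw_cont : Continuous w := hd₁.continuous.prodMk hd₃.continuous
  have hw_deriv : ∀ t, HasDerivAt w (v t (w t)) t := by
    intro t
    have h1 : HasDerivAt c₁ (deriv c₁ t) t := (hd₁ t).hasDerivAt
    have h3 : HasDerivAt c₃ (deriv c₃ t) t := (hd₃ t).hasDerivAt
    have := h1.prodMk h3
    have hveq : v t (w t) = (deriv c₁ t, deriv c₃ t) := by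
      simp only [hvdef, hH_def, hA_def, hw_def, e₁ t, e₃ t]
    rw [hveq]
    exact this
  -- zero is also a solution
  have hzero : ∀ t, v t ((0 : ℝ), (0 : ℝ)) = (0, 0) := by
    intro t
    simp only [hvdef, hH_def, hA_def]
    rw [hlibV (c₂ t), (hlibF (c₂ t) (c₄ t)).1, (hlibF (c₂ t) (c₄ t)).2]
    norm_num
  -- the zero set of w is open, by local uniqueness of ODE solutions
  set S : Set ℝ := {t | w t = (0, 0)} with hS_def
  have hopen : IsOpen S := by
    rw [isOpen_iff_mem_nhds]
    intro t₀ ht₀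
    obtain ⟨K, U, hU, hlip⟩ :=
      (hHc.contDiffAt (x := (t₀, ((0 : ℝ), (0 : ℝ))))).exists_lipschitzOnWith
    obtain ⟨ε, hε, hball⟩ := Metric.mem_nhds_iff.mp hU
    set s : ℝ → Set (ℝ × ℝ) := fun t => {u | (t, u) ∈ Metric.ball (t₀, ((0 : ℝ), (0 : ℝ))) ε}
      with hs_def
    have hvlip : ∀ t, LipschitzOnWith K (v t) (s t) := by
      intro t u hu u' hu'
      have h := hlip (hball hu) (hball hu')
      calc edist (v t u) (v t u') = edist (H (t, u)) (H (t, u')) := rfl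
        _ ≤ K * edist ((t, u) : ℝ × (ℝ × ℝ)) ((t, u') : ℝ × (ℝ × ℝ)) := h
        _ = K * edist u u' := by
            rw [Prod.edist_eq, edist_self, max_eq_right zero_le]
    have hmemw : ∀ᶠ t in nhds t₀, HasDerivAt w (v t (w t)) t ∧ w t ∈ s t := by
      have hcm : ContinuousAt (fun t => ((t, w t) : ℝ × (ℝ × ℝ))) t₀ :=
        (continuous_id.prodMk hw_cont).continuousAt
      have hmem : (t₀, w t₀) ∈ Metric.ball (t₀, ((0 : ℝ), (0 : ℝ))) ε := by
        have : w t₀ = (0, 0) := ht₀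
        rw [this]
        exact Metric.mem_ball_self hε
      filter_upwards [hcm.preimage_mem_nhds
        (Metric.isOpen_ball.mem_nhds hmem)] with t ht
      exact ⟨hw_deriv t, ht⟩
    have hmemz : ∀ᶠ t in nhds t₀,
        HasDerivAt (fun _ : ℝ => ((0 : ℝ), (0 : ℝ)))
          (v t ((fun _ : ℝ => ((0 : ℝ), (0 : ℝ))) t)) t ∧
          (fun _ : ℝ => ((0 : ℝ), (0 : ℝ))) t ∈ s t := by
      have hcm : ContinuousAt (fun t => ((t, ((0 : ℝ), (0 : ℝ))) : ℝ × (ℝ × ℝ))) t₀ :=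
        (continuous_id.prodMk continuous_const).continuousAt
      have hmem : ((t₀, ((0 : ℝ), (0 : ℝ))) : ℝ × (ℝ × ℝ))
          ∈ Metric.ball (t₀, ((0 : ℝ), (0 : ℝ))) ε := Metric.mem_ball_self hε
      filter_upwards [hcm.preimage_mem_nhds
        (Metric.isOpen_ball.mem_nhds hmem)] with t ht
      refine ⟨?_, ht⟩
      rw [hzero t]
      exact hasDerivAt_const t _
    have heq : w =ᶠ[nhds t₀] fun _ => ((0 : ℝ), (0 : ℝ)) :=
      ODE_solution_unique_of_eventually (Filter.Eventually.of_forall hvlip) hmemw hmemz ht₀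
    exact heq.mono fun t ht => ht
  have hclosed : IsClosed S := isClosed_eq hw_cont continuous_const
  have hne : (0 : ℝ) ∈ S := by
    show w 0 = (0, 0)
    simp [hw_def, h₁0, h₃0]
  have huniv : S = univ := IsClopen.eq_univ ⟨hclosed, hopen⟩ ⟨0, hne⟩
  intro t
  have ht : t ∈ S := huniv.symm ▸ mem_univ t
  replace ht : w t = (0, 0) := ht
  exact ⟨congrArg Prod.fst ht, congrArg Prod.snd ht⟩
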